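/- Let X be a 4-element set. Then Fact X is isomorphic as an orthomodular poset to MO₃ (the horizontal sum of three 4-element Boolean algebras), and the kernel of the homomorphism Γ : Sym(X) → Aut(Fact X) is the Klein four group consisting of the identity and the three double transpositions. -/

import Mathlib

set_option linter.deprecated false
set_option maxHeartbeats 1000000

/-- A pair `(θ, φ)` of equivalence relations on `X` is a factor pair if the natural map
`X → X/θ × X/φ` is a bijection. -/
def IsFactorPair {X : Type*} (θ φ : Setoid X) : Prop :=
  Function.Bijective (fun x : X => (Quotient.mk θ x, Quotient.mk φ x))

/-- The elements of `Fact X`: factor pairs of `X`. -/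
def FactorPair (X : Type*) : Type _ := {p : Setoid X × Setoid X // IsFactorPair p.1 p.2}

/-- Two equivalence relations permute if their relational compositions agree. -/
def Permutes {X : Type*} (θ ψ : Setoid X) : Prop :=
  ∀ x z : X, (∃ y, θ.r x y ∧ ψ.r y z) ↔ (∃ y, ψ.r x y ∧ θ.r y z)

/-- The partial order of `Fact X`: `(θ₁,θ₂) ≤ (ψ₁,ψ₂)` iff `θ₁ ⊆ ψ₁`, `ψ₂ ⊆ θ₂`,
and `θ₁` permutes with `ψ₂`. -/
def FactorPair.le {X : Type*} (p q : FactorPair X) : Prop :=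
  p.1.1 ≤ q.1.1 ∧ q.1.2 ≤ p.1.2 ∧ Permutes p.1.1 q.1.2

/-- The orthocomplementation of `Fact X`: `(θ₁,θ₂)' = (θ₂,θ₁)`. -/
def FactorPair.perp {X : Type*} (p : FactorPair X) : FactorPair X :=
  ⟨(p.1.2, p.1.1), by
    have h := p.2
    exact ((Equiv.prodComm _ _).bijective).comp h⟩

/-- The orthomodular poset `MO n`: bottom, top, and `2n` middle elements forming `n`
orthocomplementary pairs. -/
inductive MO (n : ℕ) : Type
  | bot : MO n
  | top : MO n
  | atom : Fin n → MO n
  | coatom : Fin n → MO n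

/-- The order of `MO n`. -/
def MO.le {n : ℕ} : MO n → MO n → Prop
  | .bot, _ => True
  | _, .top => True
  | .atom i, .atom j => i = j
  | .coatom i, .coatom j => i = j
  | _, _ => False

/-- The orthocomplementation of `MO n`. -/
def MO.perp {n : ℕ} : MO n → MO n
  | .bot => .top
  | .top => .bot
  | .atom i => .coatom i
  | .coatom i => .atom i

/-! ### Auxiliary development -/

section Aux

variable {X : Type*}

lemma om14_isFactorPair_iff (θ φ : Setoid X) :
    IsFactorPair θ φ ↔ ((∀ x y, θ.r x y → φ.r x y → x = y) ∧
      ∀ a b : X, ∃ x, θ.r x a ∧ φ.r x b) := by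
  constructor
  · rintro ⟨hi, hs⟩
    refine ⟨fun x y h1 h2 => hi (Prod.ext (Quotient.sound h1) (Quotient.sound h2)), ?_⟩
    intro a b
    obtain ⟨x, hx⟩ := hs (Quotient.mk θ a, Quotient.mk φ b)
    exact ⟨x, Quotient.exact (congrArg Prod.fst hx), Quotient.exact (congrArg Prod.snd hx)⟩
  · rintro ⟨hi, hs⟩
    constructor
    · intro x y h
      exact hi x y (Quotient.exact (congrArg Prod.fst h)) (Quotient.exact (congrArg Prod.snd h))
    · rintro ⟨qa, qb⟩
      obtain ⟨a, rfl⟩ := Quotient.exists_rep qa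
      obtain ⟨b, rfl⟩ := Quotient.exists_rep qb
      obtain ⟨x, h1, h2⟩ := hs a b
      exact ⟨x, Prod.ext (Quotient.sound h1) (Quotient.sound h2)⟩

lemma om14_bot_rel (a b : X) : (⊥ : Setoid X).r a b ↔ a = b := by
  show (⊥ : Setoid X) a b ↔ a = b; simp [Setoid.bot_def]

lemma om14_top_rel (a b : X) : (⊤ : Setoid X).r a b := by
  show (⊤ : Setoid X) a b; simp [Setoid.top_def]

lemma om14_permutes_bot_left (ψ : Setoid X) : Permutes ⊥ ψ := by
  intro x z
  constructor
  · rintro ⟨y, h1, h2⟩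
    rw [om14_bot_rel] at h1; subst h1
    exact ⟨z, h2, (om14_bot_rel z z).2 rfl⟩
  · rintro ⟨y, h1, h2⟩
    rw [om14_bot_rel] at h2; subst h2
    exact ⟨x, (om14_bot_rel x x).2 rfl, h1⟩

lemma om14_permutes_bot_right (θ : Setoid X) : Permutes θ ⊥ := by
  intro x z
  constructor
  · rintro ⟨y, h1, h2⟩
    rw [om14_bot_rel] at h2; subst h2
    exact ⟨x, (om14_bot_rel x x).2 rfl, h1⟩
  · rintro ⟨y, h1, h2⟩
    rw [om14_bot_rel] at h1; subst h1
    exact ⟨z, h2, (om14_bot_rel z z).2 rfl⟩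

lemma om14_permutes_of_isFactorPair {θ ψ : Setoid X} (h : IsFactorPair θ ψ) :
    Permutes θ ψ := by
  obtain ⟨-, hs⟩ := (om14_isFactorPair_iff θ ψ).1 h
  intro x z
  constructor
  · rintro -
    obtain ⟨y, h1, h2⟩ := hs z x
    exact ⟨y, ψ.symm' h2, h1⟩
  · rintro -
    obtain ⟨y, h1, h2⟩ := hs x z
    exact ⟨y, θ.symm' h1, h2⟩

lemma om14_exhaust4 [Fintype X] (hX : Fintype.card X = 4) {a b c d : X}
    (hab : a ≠ b) (hac : a ≠ c) (had : a ≠ d) (hbc : b ≠ c) (hbd : b ≠ d) (hcd : c ≠ d) :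
    ∀ z : X, z = a ∨ z = b ∨ z = c ∨ z = d := by
  intro z
  have hinj : Function.Injective (![a, b, c, d] : Fin 4 → X) := by
    intro i j hij
    fin_cases i <;> fin_cases j <;> simp_all
  have hsurj : Function.Surjective (![a, b, c, d] : Fin 4 → X) :=
    ((Fintype.bijective_iff_injective_and_card _).2 ⟨hinj, by simp [hX]⟩).2
  obtain ⟨i, rfl⟩ := hsurj z
  fin_cases i <;> simp

/-- A partner structure on a setoid: every class is `{a, pr a}` with `pr a ≠ a`. -/
def Om14Partner (θ : Setoid X) (pr : X → X) : Prop :=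
  ∀ a, pr a ≠ a ∧ ∀ b, (θ.r a b ↔ b = a ∨ b = pr a)

lemma om14Partner_partner {θ : Setoid X} {pr : X → X} (h : Om14Partner θ pr) (a : X) :
    pr (pr a) = a := by
  have h1 : θ.r a (pr a) := ((h a).2 (pr a)).2 (Or.inr rfl)
  have h2 := ((h (pr a)).2 a).1 (θ.symm' h1)
  rcases h2 with h2 | h2
  · exact absurd h2.symm (h a).1
  · exact h2.symm

lemma om14Partner_ext [Fintype X] (hX : Fintype.card X = 4) {θ ψ : Setoid X}
    {pr pr' : X → X} (hθ : Om14Partner θ pr) (hψ : Om14Partner ψ pr')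
    (a0 : X) (h0 : pr a0 = pr' a0) : θ = ψ := by
  have key : ∀ a, pr a = pr' a := by
    intro a
    by_cases ha : a = a0
    · subst ha; exact h0
    by_cases hb : a = pr a0
    · subst hb
      rw [om14Partner_partner hθ, h0, om14Partner_partner hψ]
    -- a is not a0 nor b0 := pr a0
    set b0 := pr a0 with hb0
    have hb0' : pr' a0 = b0 := h0.symm
    have hpne : ∀ (σ : Setoid X) (q : X → X), Om14Partner σ q → q a0 = b0 →
        q a ≠ a ∧ q a ≠ a0 ∧ q a ≠ b0 := by
      intro σ q hq hqa0
      refine ⟨(hq a).1, ?_, ?_⟩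
      · intro h
        have := om14Partner_partner hq a
        rw [h, hqa0] at this
        exact hb this.symm
      · intro h
        have := om14Partner_partner hq a
        rw [h] at this
        have : q b0 = a := this
        have h2 := om14Partner_partner hq a0
        rw [hqa0] at h2
        rw [h2] at this
        exact ha this.symm
    obtain ⟨h1, h2, h3⟩ := hpne θ pr hθ rfl
    obtain ⟨h1', h2', h3'⟩ := hpne ψ pr' hψ hb0'
    have ha0b0 : a0 ≠ b0 := fun h => (hθ a0).1 h.symm
    have := om14_exhaust4 hX (a := a0) (b := b0) (c := a) (d := pr a)
      ha0b0 (Ne.symm ha) (Ne.symm h2) (Ne.symm hb) (Ne.symm h3) (Ne.symm h1) (pr' a)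
    rcases this with h | h | h | h
    · exact absurd h h2'
    · exact absurd h h3'
    · exact absurd h h1'
    · exact h.symm
  apply Setoid.ext
  intro a b
  show θ.r a b ↔ ψ.r a b
  rw [(hθ a).2 b, (hψ a).2 b, key a]

end Aux

/-! ### The three 2+2 partitions -/

private def om14fB : Fin 3 → Fin 4 → Bool
  | 0 => ![true, true, false, false]
  | 1 => ![true, false, true, false]
  | 2 => ![true, false, false, true]

private def om14prq : Fin 3 → Fin 4 → Fin 4
  | 0 => ![1, 0, 3, 2]
  | 1 => ![2, 3, 0, 1]
  | 2 => ![3, 2, 1, 0]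

private lemma om14_q_partner : ∀ (i : Fin 3) (j : Fin 4), om14prq i j ≠ j ∧
    ∀ k, (om14fB i j = om14fB i k ↔ (k = j ∨ k = om14prq i j)) := by decide

section PX

variable {X : Type*} (x : Fin 4 ≃ X)

private def om14PX (i : Fin 3) : Setoid X :=
  ⟨fun u v => om14fB i (x.symm u) = om14fB i (x.symm v),
    ⟨fun _ => rfl, Eq.symm, Eq.trans⟩⟩

private lemma om14PX_rel (i : Fin 3) (u v : X) :
    (om14PX x i).r u v ↔ om14fB i (x.symm u) = om14fB i (x.symm v) := Iff.rfl

private lemma om14PX_isPartner (i : Fin 3) :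
    Om14Partner (om14PX x i) (fun a => x (om14prq i (x.symm a))) := by
  intro a
  constructor
  · intro h
    have : om14prq i (x.symm a) = x.symm a := by
      have := congrArg x.symm h
      simpa using this
    exact (om14_q_partner i (x.symm a)).1 this
  · intro b
    rw [om14PX_rel, (om14_q_partner i (x.symm a)).2 (x.symm b)]
    constructor
    · rintro (h | h)
      · left; have := congrArg x h; simpa using this
      · right; have := congrArg x h; simpa using this
    · rintro (h | h)
      · left; subst h; simp
      · right; subst h; simp
  
private lemma om14_d1 : ∀ (i j : Fin 3), i ≠ j → ∀ a b : Fin 4,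
    om14fB i a = om14fB i b → om14fB j a = om14fB j b → a = b := by decide

private lemma om14_d2 : ∀ (i j : Fin 3), i ≠ j → ∀ a b : Fin 4,
    ∃ c, om14fB i c = om14fB i a ∧ om14fB j c = om14fB j b := by decide

private lemma om14_d3 : ∀ (i j : Fin 3),
    (om14prq i 0 = 0 ∨ om14prq i 0 = om14prq j 0) → i = j := by decide

private lemma om14_d4 : ∀ i : Fin 3, ∃ a b : Fin 4, om14fB i a ≠ om14fB i b := by decide

private lemma om14_d5 : ∀ k : Fin 4, k ≠ 0 → ∃ i, om14fB i 0 = om14fB i k := by decide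

private lemma om14_d6 : ∀ j k : Fin 4, j ≠ k → ∃ i, om14fB i j = om14fB i k := by decide

private lemma om14PX_isFactorPair {i j : Fin 3} (hij : i ≠ j) :
    IsFactorPair (om14PX x i) (om14PX x j) := by
  rw [om14_isFactorPair_iff]
  constructor
  · intro u v h1 h2
    have := om14_d1 i j hij (x.symm u) (x.symm v) h1 h2
    have := congrArg x this
    simpa using this
  · intro a b
    obtain ⟨c, h1, h2⟩ := om14_d2 i j hij (x.symm a) (x.symm b)
    refine ⟨x c, ?_, ?_⟩ <;> rw [om14PX_rel] <;> simp [h1, h2]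

private lemma om14PX_rel_self (i : Fin 3) :
    (om14PX x i).r (x 0) (x (om14prq i 0)) := by
  rw [om14PX_rel]; simp
  exact ((om14_q_partner i 0).2 (om14prq i 0)).2 (Or.inr rfl)

private lemma om14PX_not_le {i j : Fin 3} (hij : i ≠ j) : ¬ (om14PX x i ≤ om14PX x j) := by
  intro h
  have h2 : (om14PX x j).r (x 0) (x (om14prq i 0)) :=
    Setoid.le_def.1 h (om14PX_rel_self x i)
  have h2' : om14fB j (x.symm (x 0)) = om14fB j (x.symm (x (om14prq i 0))) := h2
  simp only [Equiv.symm_apply_apply] at h2'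
  exact hij (om14_d3 i j (((om14_q_partner j 0).2 (om14prq i 0)).1 h2'))

private lemma om14PX_le_iff (i j : Fin 3) : om14PX x i ≤ om14PX x j ↔ i = j := by
  constructor
  · intro h
    by_contra hij
    exact om14PX_not_le x hij h
  · rintro rfl; exact le_refl _

private lemma om14_top_not_le_PX (i : Fin 3) : ¬ ((⊤ : Setoid X) ≤ om14PX x i) := by
  intro h
  obtain ⟨a, b, hab⟩ := om14_d4 i
  have h2 : (om14PX x i).r (x a) (x b) := Setoid.le_def.1 h (om14_top_rel (x a) (x b))
  have h2' : om14fB i (x.symm (x a)) = om14fB i (x.symm (x b)) := h2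
  simp only [Equiv.symm_apply_apply] at h2'
  exact hab h2'

private lemma om14_PX_not_le_bot (i : Fin 3) : ¬ (om14PX x i ≤ (⊥ : Setoid X)) := by
  intro h
  have h2 : (⊥ : Setoid X).r (x 0) (x (om14prq i 0)) :=
    Setoid.le_def.1 h (om14PX_rel_self x i)
  rw [om14_bot_rel] at h2
  have := x.injective h2
  exact (om14_q_partner i 0).1 this.symm

include x in
private lemma om14_top_not_le_bot : ¬ ((⊤ : Setoid X) ≤ (⊥ : Setoid X)) := by
  intro h
  have h2 : (⊥ : Setoid X).r (x 0) (x 1) := Setoid.le_def.1 h (om14_top_rel (x 0) (x 1))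
  rw [om14_bot_rel] at h2
  have := x.injective h2
  simp at this

private lemma om14PX_ne_bot (i : Fin 3) : om14PX x i ≠ ⊥ :=
  fun h => om14_PX_not_le_bot x i (h ▸ le_refl _)

private lemma om14PX_ne_top (i : Fin 3) : om14PX x i ≠ ⊤ :=
  fun h => om14_top_not_le_PX x i (h ▸ le_refl _)

include x in
private lemma om14_bot_ne_top : (⊥ : Setoid X) ≠ ⊤ :=
  fun h => om14_top_not_le_bot x (h ▸ le_refl _)

private lemma om14PX_inj {i j : Fin 3} (h : om14PX x i = om14PX x j) : i = j :=
  (om14PX_le_iff x i j).1 (h ▸ le_refl _)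

end PX

/-! ### Classification of factor pairs -/

section Classify

variable {X : Type*} [Fintype X]

private lemma om14_class_nontrivial {θ φ : Setoid X}
    (hinj : ∀ u v, θ.r u v → φ.r u v → u = v)
    (hsurj : ∀ a b, ∃ y, θ.r y a ∧ φ.r y b)
    (hne : ∃ u v, θ.r u v ∧ u ≠ v) (a : X) : ∃ b, b ≠ a ∧ θ.r a b := by
  obtain ⟨u, v, huv, hne⟩ := hne
  obtain ⟨s, hs1, hs2⟩ := hsurj a u
  obtain ⟨t, ht1, ht2⟩ := hsurj a v
  have hst : s ≠ t := by
    rintro rfl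
    exact hne (hinj u v huv (φ.trans' (φ.symm' hs2) ht2))
  by_cases hsa : s = a
  · exact ⟨t, fun h => hst (hsa.trans h.symm), θ.symm' ht1⟩
  · exact ⟨s, hsa, θ.symm' hs1⟩

private lemma om14_classify (hX : Fintype.card X = 4) (x : Fin 4 ≃ X)
    {θ φ : Setoid X} (h : IsFactorPair θ φ) :
    (θ = ⊥ ∧ φ = ⊤) ∨ (θ = ⊤ ∧ φ = ⊥) ∨
      ∃ i j : Fin 3, i ≠ j ∧ θ = om14PX x i ∧ φ = om14PX x j := by
  obtain ⟨hinj, hsurj⟩ := (om14_isFactorPair_iff θ φ).1 h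
  have hsurj' : ∀ a b, ∃ y, φ.r y a ∧ θ.r y b := by
    intro a b; obtain ⟨y, h1, h2⟩ := hsurj b a; exact ⟨y, h2, h1⟩
  have hinj' : ∀ u v, φ.r u v → θ.r u v → u = v := fun u v h1 h2 => hinj u v h2 h1
  by_cases hθ : ∀ a b, θ.r a b → a = b
  · left
    constructor
    · apply Setoid.ext; intro a b
      show θ.r a b ↔ (⊥ : Setoid X).r a b
      rw [om14_bot_rel]
      exact ⟨hθ a b, fun hh => hh ▸ θ.refl' a⟩
    · apply Setoid.ext; intro a b
      show φ.r a b ↔ (⊤ : Setoid X).r a b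
      simp only [om14_top_rel, iff_true]
      obtain ⟨y, h1, h2⟩ := hsurj a b
      have := hθ y a h1
      exact this ▸ h2
  by_cases hφ : ∀ a b, φ.r a b → a = b
  · right; left
    constructor
    · apply Setoid.ext; intro a b
      show θ.r a b ↔ (⊤ : Setoid X).r a b
      simp only [om14_top_rel, iff_true]
      obtain ⟨y, h1, h2⟩ := hsurj a b
      have := hφ y b h2
      exact θ.symm' (this ▸ h1)
    · apply Setoid.ext; intro a b
      show φ.r a b ↔ (⊥ : Setoid X).r a b
      rw [om14_bot_rel]
      exact ⟨hφ a b, fun hh => hh ▸ φ.refl' a⟩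
  right; right
  push_neg at hθ hφ
  obtain ⟨u1, v1, hu1, hne1⟩ := hθ
  obtain ⟨u2, v2, hu2, hne2⟩ := hφ
  have hθ2 : ∀ a, ∃ b, b ≠ a ∧ θ.r a b :=
    om14_class_nontrivial hinj hsurj ⟨u1, v1, hu1, hne1⟩
  have hφ2 : ∀ a, ∃ b, b ≠ a ∧ φ.r a b :=
    om14_class_nontrivial hinj' hsurj' ⟨u2, v2, hu2, hne2⟩
  have huniq : ∀ (σ τ : Setoid X), (∀ u v, σ.r u v → τ.r u v → u = v) →
      (∀ a, ∃ b, b ≠ a ∧ τ.r a b) →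
      ∀ a b c, b ≠ a → c ≠ a → b ≠ c → σ.r a b → σ.r a c → False := by
    intro σ τ hij hτ2 a b c hba hca hbc hab hac
    obtain ⟨a', ha'a, haa'⟩ := hτ2 a
    have ha'b : a' ≠ b := by
      rintro rfl
      exact hba (hij a a' hab haa').symm
    have ha'c : a' ≠ c := by
      rintro rfl
      exact hca (hij a a' hac haa').symm
    obtain ⟨b', hb'b, hbb'⟩ := hτ2 b
    rcases om14_exhaust4 hX (a := a) (b := b) (c := c) (d := a')
      (Ne.symm hba) (Ne.symm hca) (Ne.symm ha'a) hbc (Ne.symm ha'b) (Ne.symm ha'c) b' with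
      hb' | hb' | hb' | hb'
    · exact hba (hij b a (σ.symm' hab) (hb' ▸ hbb'))
    · exact hb'b hb'
    · exact hbc (hij b c (σ.trans' (σ.symm' hab) hac) (hb' ▸ hbb'))
    · exact hba (hij a b hab (τ.trans' haa' (τ.symm' (hb' ▸ hbb')))).symm
  have hpθ : ∀ a, ∃ b, b ≠ a ∧ θ.r a b ∧ ∀ c, θ.r a c → c = a ∨ c = b := by
    intro a
    obtain ⟨b, hba, hab⟩ := hθ2 a
    refine ⟨b, hba, hab, fun c hac => ?_⟩
    by_contra hc
    push_neg at hc
    exact huniq θ φ hinj hφ2 a b c hba hc.1 (fun hh => hc.2 hh.symm) hab hac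
  have hpφ : ∀ a, ∃ b, b ≠ a ∧ φ.r a b ∧ ∀ c, φ.r a c → c = a ∨ c = b := by
    intro a
    obtain ⟨b, hba, hab⟩ := hφ2 a
    refine ⟨b, hba, hab, fun c hac => ?_⟩
    by_contra hc
    push_neg at hc
    exact huniq φ θ hinj' hθ2 a b c hba hc.1 (fun hh => hc.2 hh.symm) hab hac
  have hPθ : Om14Partner θ (fun a => (hpθ a).choose) := by
    intro a
    obtain ⟨h1, h2, h3⟩ := (hpθ a).choose_spec
    refine ⟨h1, fun b => ⟨h3 b, ?_⟩⟩
    rintro (rfl | rfl)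
    exacts [θ.refl' _, h2]
  have hPφ : Om14Partner φ (fun a => (hpφ a).choose) := by
    intro a
    obtain ⟨h1, h2, h3⟩ := (hpφ a).choose_spec
    refine ⟨h1, fun b => ⟨h3 b, ?_⟩⟩
    rintro (rfl | rfl)
    exacts [φ.refl' _, h2]
  have key : ∀ (σ : Setoid X) (pr : X → X), Om14Partner σ pr → ∃ i, σ = om14PX x i := by
    intro σ pr hP
    have hk0 : x.symm (pr (x 0)) ≠ 0 := by
      intro hh
      have : pr (x 0) = x 0 := by
        have := congrArg x hh
        simpa using this
      exact (hP (x 0)).1 this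
    obtain ⟨i, hi⟩ := om14_d5 _ hk0
    refine ⟨i, om14Partner_ext hX hP (om14PX_isPartner x i) (x 0) ?_⟩
    have hki : x.symm (pr (x 0)) = om14prq i 0 := by
      rcases ((om14_q_partner i 0).2 _).1 hi with hh | hh
      · exact absurd hh hk0
      · exact hh
    show pr (x 0) = x (om14prq i (x.symm (x 0)))
    rw [Equiv.symm_apply_apply, ← hki]
    simp
  obtain ⟨i, hi⟩ := key θ _ hPθ
  obtain ⟨j, hj⟩ := key φ _ hPφ
  refine ⟨i, j, ?_, hi, hj⟩
  rintro rfl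
  have h1 : θ.r (x 0) ((hpθ (x 0)).choose) := (hpθ (x 0)).choose_spec.2.1
  have h2 : φ.r (x 0) ((hpθ (x 0)).choose) := by
    rw [hj, ← hi]
    exact h1
  exact (hpθ (x 0)).choose_spec.1 (hinj _ _ h1 h2).symm

end Classify

private lemma om14_fp_bot {X : Type*} : IsFactorPair (⊥ : Setoid X) ⊤ := by
  rw [om14_isFactorPair_iff]
  refine ⟨fun u v h1 _ => (om14_bot_rel u v).1 h1, fun a b => ?_⟩
  exact ⟨a, (om14_bot_rel a a).2 rfl, om14_top_rel a b⟩

private lemma om14_fp_top {X : Type*} : IsFactorPair (⊤ : Setoid X) ⊥ := by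
  rw [om14_isFactorPair_iff]
  refine ⟨fun u v _ h2 => (om14_bot_rel u v).1 h2, fun a b => ?_⟩
  exact ⟨b, om14_top_rel b a, (om14_bot_rel b b).2 rfl⟩

private lemma om14_ne_succ : ∀ i : Fin 3, i ≠ i + 1 := by decide

private lemma om14_d7 : ∀ i j : Fin 3, i = j + 1 → j = i + 1 → False := by decide

private lemma om14_d8 : ∀ i j : Fin 3, i + 1 = j + 1 → i = j := by decide

private lemma om14_d9 : ∀ i j : Fin 3, i ≠ j → j = i + 1 ∨ i = j + 1 := by decide

private def om14g {X : Type*} (x : Fin 4 ≃ X) : MO 3 → FactorPair X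
  | .bot => ⟨(⊥, ⊤), om14_fp_bot⟩
  | .top => ⟨(⊤, ⊥), om14_fp_top⟩
  | .atom i => ⟨(om14PX x i, om14PX x (i + 1)), om14PX_isFactorPair x (om14_ne_succ i)⟩
  | .coatom i => ⟨(om14PX x (i + 1), om14PX x i), om14PX_isFactorPair x (om14_ne_succ i).symm⟩

section Main

variable {X : Type*} [Fintype X]

private lemma om14g_bijective (hX : Fintype.card X = 4) (x : Fin 4 ≃ X) :
    Function.Bijective (om14g x) := by
  constructor
  · intro a b h
    have h1 : (om14g x a).1.1 = (om14g x b).1.1 := by rw [h]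
    have h2 : (om14g x a).1.2 = (om14g x b).1.2 := by rw [h]
    cases a <;> cases b <;> simp only [om14g] at h1 h2
    · rfl
    · exact absurd h1 (om14_bot_ne_top x)
    · exact absurd h1.symm (om14PX_ne_bot x _)
    · exact absurd h1.symm (om14PX_ne_bot x _)
    · exact absurd h1.symm (om14_bot_ne_top x)
    · rfl
    · exact absurd h1.symm (om14PX_ne_top x _)
    · exact absurd h1.symm (om14PX_ne_top x _)
    · exact absurd h1 (om14PX_ne_bot x _)
    · exact absurd h1 (om14PX_ne_top x _)
    · rw [om14PX_inj x h1]
    · exact (om14_d7 _ _ (om14PX_inj x h1) (om14PX_inj x h2).symm).elim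
    · exact absurd h1 (om14PX_ne_bot x _)
    · exact absurd h1 (om14PX_ne_top x _)
    · exact (om14_d7 _ _ (om14PX_inj x h2) (om14PX_inj x h1).symm).elim
    · rw [om14PX_inj x h2]
  · rintro ⟨⟨θ, φ⟩, hp⟩
    rcases om14_classify hX x hp with ⟨h1, h2⟩ | ⟨h1, h2⟩ | ⟨i, j, hij, h1, h2⟩
    · exact ⟨MO.bot, Subtype.ext (Prod.ext h1.symm h2.symm)⟩
    · exact ⟨MO.top, Subtype.ext (Prod.ext h1.symm h2.symm)⟩
    · rcases om14_d9 i j hij with hh | hh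
      · exact ⟨MO.atom i, Subtype.ext (Prod.ext h1.symm (by rw [h2, hh]; rfl))⟩
      · exact ⟨MO.coatom j, Subtype.ext (Prod.ext (by rw [h1, hh]; rfl) h2.symm)⟩

private lemma om14g_le (x : Fin 4 ≃ X) (a b : MO 3) :
    FactorPair.le (om14g x a) (om14g x b) ↔ MO.le a b := by
  cases a <;> cases b
  case bot.bot => exact iff_of_true ⟨le_refl _, le_refl _, om14_permutes_bot_left _⟩ trivial
  case bot.top => exact iff_of_true ⟨bot_le, bot_le, om14_permutes_bot_left _⟩ trivial
  case bot.atom j => exact iff_of_true ⟨bot_le, le_top, om14_permutes_bot_left _⟩ trivial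
  case bot.coatom j => exact iff_of_true ⟨bot_le, le_top, om14_permutes_bot_left _⟩ trivial
  case top.bot => exact iff_of_false (fun h => om14_top_not_le_bot x h.1) id
  case top.top => exact iff_of_true ⟨le_refl _, le_refl _, om14_permutes_bot_right _⟩ trivial
  case top.atom j => exact iff_of_false (fun h => om14_top_not_le_PX x _ h.1) id
  case top.coatom j => exact iff_of_false (fun h => om14_top_not_le_PX x _ h.1) id
  case atom.bot i => exact iff_of_false (fun h => om14_PX_not_le_bot x _ h.1) id
  case atom.top i => exact iff_of_true ⟨le_top, bot_le, om14_permutes_bot_right _⟩ trivial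
  case atom.atom i j =>
    show _ ↔ i = j
    constructor
    · intro h
      exact (om14PX_le_iff x i j).1 h.1
    · rintro rfl
      exact ⟨le_refl _, le_refl _,
        om14_permutes_of_isFactorPair (om14PX_isFactorPair x (om14_ne_succ i))⟩
  case atom.coatom i j =>
    refine iff_of_false (fun h => ?_) id
    exact om14_d7 _ _ ((om14PX_le_iff x i (j + 1)).1 h.1) ((om14PX_le_iff x j (i + 1)).1 h.2.1)
  case coatom.bot i => exact iff_of_false (fun h => om14_PX_not_le_bot x _ h.1) id
  case coatom.top i => exact iff_of_true ⟨le_top, bot_le, om14_permutes_bot_right _⟩ trivial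
  case coatom.atom i j =>
    refine iff_of_false (fun h => ?_) id
    exact om14_d7 _ _ ((om14PX_le_iff x (j + 1) i).1 h.2.1).symm
      ((om14PX_le_iff x (i + 1) j).1 h.1).symm
  case coatom.coatom i j =>
    show _ ↔ i = j
    constructor
    · intro h
      exact om14_d8 _ _ ((om14PX_le_iff x (i + 1) (j + 1)).1 h.1)
    · rintro rfl
      exact ⟨le_refl _, le_refl _,
        om14_permutes_of_isFactorPair (om14PX_isFactorPair x (om14_ne_succ i).symm)⟩

private lemma om14g_perp (x : Fin 4 ≃ X) (a : MO 3) :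
    FactorPair.perp (om14g x a) = om14g x (MO.perp a) := by
  cases a <;> exact Subtype.ext rfl

end Main

theorem stmt_14 {X : Type*} [Fintype X] (hX : Fintype.card X = 4) :
    (∃ e : FactorPair X ≃ MO 3,
      (∀ p q : FactorPair X, FactorPair.le p q ↔ MO.le (e p) (e q)) ∧
      (∀ p : FactorPair X, e (FactorPair.perp p) = MO.perp (e p))) ∧
    (∀ α : Equiv.Perm X,
      (∀ θ φ : Setoid X, IsFactorPair θ φ →
        (Setoid.comap α.symm θ, Setoid.comap α.symm φ) = (θ, φ)) ↔
      (α * α = 1 ∧ (α = 1 ∨ ∀ x : X, α x ≠ x))) := by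
  classical
  have x : Fin 4 ≃ X := (Fintype.equivFinOfCardEq hX).symm
  constructor
  · -- Part 1
    set σ := Equiv.ofBijective (om14g x) (om14g_bijective hX x) with hσ
    refine ⟨σ.symm, fun p q => ?_, fun p => ?_⟩
    · have hp : om14g x (σ.symm p) = p := σ.apply_symm_apply p
      have hq : om14g x (σ.symm q) = q := σ.apply_symm_apply q
      have := om14g_le x (σ.symm p) (σ.symm q)
      rw [hp, hq] at this
      exact this
    · have hp : om14g x (σ.symm p) = p := σ.apply_symm_apply p
      have := om14g_perp x (σ.symm p)
      rw [hp] at this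
      rw [this]
      exact σ.symm_apply_apply _
  · -- Part 2
    intro α
    constructor
    · intro H
      have hfix : ∀ i : Fin 3, Setoid.comap α.symm (om14PX x i) = om14PX x i := by
        intro i
        have := H (om14PX x i) (om14PX x (i + 1)) (om14PX_isFactorPair x (om14_ne_succ i))
        exact congrArg Prod.fst this
      have hpres : ∀ (i : Fin 3) (a b : X),
          (om14PX x i).r a b → (om14PX x i).r (α a) (α b) := by
        intro i a b hab
        have h2 : (Setoid.comap α.symm (om14PX x i)).r (α a) (α b) := by
          show (om14PX x i).r (α.symm (α a)) (α.symm (α b))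
          simpa using hab
        rw [hfix i] at h2
        exact h2
      have hinv : ∀ z : X, α (α z) = z := by
        intro z
        by_cases hz : α z = z
        · rw [hz, hz]
        · have hne : x.symm z ≠ x.symm (α z) := fun hh => hz (x.symm.injective hh).symm
          obtain ⟨i, hi⟩ := om14_d6 _ _ hne
          have h1 : (om14PX x i).r z (α z) := hi
          have h2 := hpres i _ _ h1
          have hP := om14PX_isPartner x i
          rcases ((hP (α z)).2 (α (α z))).1 h2 with hh | hh
          · exact absurd (α.injective hh) hz
          · rcases ((hP (α z)).2 z).1 ((om14PX x i).symm' h1) with hh2 | hh2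
            · exact absurd hh2.symm hz
            · rw [hh, ← hh2]
      refine ⟨Equiv.ext fun z => ?_, ?_⟩
      · simpa [Equiv.Perm.mul_apply] using hinv z
      · by_cases h1 : α = 1
        · exact Or.inl h1
        · right
          intro y hy
          have h2 : ¬ ∀ z : X, α z = z := fun hh => h1 (Equiv.ext hh)
          push_neg at h2
          obtain ⟨z, hz⟩ := h2
          have hyz : y ≠ z := fun hh => hz (hh ▸ hy)
          have hne : x.symm y ≠ x.symm z := fun hh => hyz (x.symm.injective hh)
          obtain ⟨i, hi⟩ := om14_d6 _ _ hne
          have hrel : (om14PX x i).r y z := hi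
          have h3 := hpres i _ _ hrel
          rw [hy] at h3
          have hP := om14PX_isPartner x i
          rcases ((hP y).2 (α z)).1 h3 with hh | hh
          · exact absurd (α.injective (hh.trans hy.symm)) hyz.symm
          · rcases ((hP y).2 z).1 hrel with hh2 | hh2
            · exact hyz hh2.symm |>.elim
            · exact hz (hh.trans hh2.symm)
    · rintro ⟨hsq, hcase⟩ θ φ hfp
      have hinvsymm : α.symm = α := by
        have h1 : α⁻¹ = α := inv_eq_of_mul_eq_one_left hsq
        rw [← Equiv.Perm.inv_def, h1]
      rcases hcase with rfl | hff
      · have hc : ∀ ψ : Setoid X, Setoid.comap (1 : Equiv.Perm X).symm ψ = ψ := by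
          intro ψ
          apply Setoid.ext
          intro a b
          simp [Setoid.comap_rel, hinvsymm]
        simp only [hc]
      · have hinv : ∀ z : X, α (α z) = z := by
          intro z
          have := Equiv.ext_iff.1 hsq z
          simpa [Equiv.Perm.mul_apply] using this
        have claim : ∀ ψ : Setoid X, (ψ = ⊥ ∨ ψ = ⊤ ∨ ∃ i, ψ = om14PX x i) →
            Setoid.comap α.symm ψ = ψ := by
          rintro ψ (rfl | rfl | ⟨i, rfl⟩)
          · apply Setoid.ext
            intro a b
            rw [Setoid.comap_rel]
            show (⊥ : Setoid X).r _ _ ↔ (⊥ : Setoid X).r a b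
            rw [om14_bot_rel, om14_bot_rel]
            exact α.symm.injective.eq_iff
          · apply Setoid.ext
            intro a b
            exact iff_of_true (om14_top_rel _ _) (om14_top_rel _ _)
          · have hP := om14PX_isPartner x i
            have hstep : ∀ a b, (om14PX x i).r a b → (om14PX x i).r (α a) (α b) := by
              intro a b hab
              rcases ((hP a).2 b).1 hab with rfl | hb
              · exact (om14PX x i).refl' _
              · -- b is the partner of a
                by_cases hab2 : α a = b
                · have hba : α b = a := by rw [← hab2, hinv]
                  rw [hab2, hba]
                  exact (om14PX x i).symm' hab
                · have hca : α a ≠ a := hff a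
                  have hrelc : (om14PX x i).r (α a) (x (om14prq i (x.symm (α a)))) :=
                    ((hP (α a)).2 _).2 (Or.inr rfl)
                  set c := α a with hc
                  set pc := x (om14prq i (x.symm c)) with hpc
                  have hpcc : pc ≠ c := (hP c).1
                  have hb' : b = x (om14prq i (x.symm a)) := hb
                  have hpca : pc ≠ a := by
                    intro hh
                    have hrel2 : (om14PX x i).r a c := (om14PX x i).symm' (hh ▸ hrelc)
                    rcases ((hP a).2 c).1 hrel2 with hh2 | hh2
                    · exact hca hh2
                    · have hh2' : c = x (om14prq i (x.symm a)) := hh2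
                      exact hab2 (hh2'.trans hb'.symm)
                  have hprb : x (om14prq i (x.symm b)) = a := by
                    rw [hb']
                    exact om14Partner_partner hP a
                  have hpcb : pc ≠ b := by
                    intro hh
                    have hrel2 : (om14PX x i).r b c := (om14PX x i).symm' (hh ▸ hrelc)
                    rcases ((hP b).2 c).1 hrel2 with hh2 | hh2
                    · exact hab2 (hh2 ▸ rfl)
                    · have hh2' : c = x (om14prq i (x.symm b)) := hh2
                      rw [hprb] at hh2'
                      exact hca hh2'
                  have hba : a ≠ b := fun hh => (hP a).1 (hb'.symm.trans hh.symm)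
                  have hac : a ≠ c := hca.symm
                  have hbc : b ≠ c := fun hh => hab2 hh.symm
                  rcases om14_exhaust4 hX hba hac (Ne.symm hpca) hbc (Ne.symm hpcb)
                    (Ne.symm hpcc) (α b) with hh | hh | hh | hh
                  · exact absurd (show α a = b by rw [← hh, hinv]) hab2
                  · exact absurd hh (hff b)
                  · exact absurd (α.injective (hh.trans hc)) hba.symm
                  · rw [hh]
                    exact hrelc
            apply Setoid.ext
            intro a b
            rw [Setoid.comap_rel, hinvsymm]
            constructor
            · intro hh
              have := hstep _ _ hh
              rw [hinv, hinv] at this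
              exact this
            · exact hstep a b
        rcases om14_classify hX x hfp with ⟨h1, h2⟩ | ⟨h1, h2⟩ | ⟨i, j, _, h1, h2⟩
        · rw [h1, h2, claim _ (Or.inl rfl), claim _ (Or.inr (Or.inl rfl))]
        · rw [h1, h2, claim _ (Or.inr (Or.inl rfl)), claim _ (Or.inl rfl)]
        · rw [h1, h2, claim _ (Or.inr (Or.inr ⟨i, rfl⟩)), claim _ (Or.inr (Or.inr ⟨j, rfl⟩))]
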